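/- With f the cascading reward function, for any finite set X of items, the maximum of f(A,u,w) over all permutations A of X is attained by the permutation that sorts the items of X in descending order of their weights w. That is, f(DesW(X),u,w) = max over A ∈ Perm(X) of f(A,u,w), where DesW(X) sorts X in descending order of w. -/

import Mathlib

/-- The cascading reward function. -/
noncomputable def cascadeF {α : Type*} (u w : α → ℝ) : List α → ℝ
  | [] => 0
  | a :: t => u a * w a + (1 - u a) * cascadeF u w t

lemma cascade_swap {α : Type*} (u w : α → ℝ)
    (hu : ∀ a, 0 ≤ u a ∧ u a ≤ 1) (x y : α) (t : List α) (hw : w y ≤ w x) :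
    cascadeF u w (y :: x :: t) ≤ cascadeF u w (x :: y :: t) := by
  have hx := hu x; have hy := hu y
  simp only [cascadeF]
  nlinarith [mul_nonneg (mul_nonneg hx.1 hy.1) (sub_nonneg.mpr hw)]

lemma cascade_front {α : Type*} (u w : α → ℝ)
    (hu : ∀ a, 0 ≤ u a ∧ u a ≤ 1) (d : α) :
    ∀ (p : List α), (∀ x ∈ p, w x ≤ w d) → ∀ q : List α,
    cascadeF u w (p ++ d :: q) ≤ cascadeF u w (d :: (p ++ q)) := by
  intro p
  induction p with
  | nil => intro _ q; simp
  | cons a p ih =>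
      intro hp q
      have ha := hu a
      have h1 : cascadeF u w (p ++ d :: q) ≤ cascadeF u w (d :: (p ++ q)) :=
        ih (fun x hx => hp x (List.mem_cons_of_mem _ hx)) q
      calc cascadeF u w ((a :: p) ++ d :: q)
          = u a * w a + (1 - u a) * cascadeF u w (p ++ d :: q) := rfl
        _ ≤ u a * w a + (1 - u a) * cascadeF u w (d :: (p ++ q)) := by
            have : (0:ℝ) ≤ 1 - u a := by linarith [ha.2]
            nlinarith
        _ = cascadeF u w (a :: d :: (p ++ q)) := rfl
        _ ≤ cascadeF u w (d :: a :: (p ++ q)) :=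
            cascade_swap u w hu d a _ (hp a List.mem_cons_self)
        _ = cascadeF u w (d :: ((a :: p) ++ q)) := rfl

/-- The maximum of `f(A,u,w)` over all permutations `A` of a fixed set of items
is attained by the list sorted in descending order of the weights `w`:
every permutation `A` of a descending-sorted list `D` satisfies `f(A) ≤ f(D)`. -/
theorem descending_sort_is_optimal {α : Type*} (u w : α → ℝ)
    (hu : ∀ a, 0 ≤ u a ∧ u a ≤ 1)
    (D : List α) (hD : D.Pairwise (fun a b => w b ≤ w a)) :
    ∀ A : List α, A.Perm D → cascadeF u w A ≤ cascadeF u w D := by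
  induction D with
  | nil => intro A hA; simp [List.Perm.eq_nil hA]
  | cons d s ih =>
      intro A hA
      have hds := List.pairwise_cons.mp hD
      have hdA : d ∈ A := (hA.mem_iff).mpr List.mem_cons_self
      obtain ⟨p, q, rfl⟩ := List.append_of_mem hdA
      have hperm : (p ++ q).Perm s := by
        have h1 : (p ++ d :: q).Perm (d :: (p ++ q)) := List.perm_middle
        exact (h1.symm.trans hA).cons_inv
      have hmaxall : ∀ x ∈ p ++ q, w x ≤ w d := by
        intro x hx
        have : x ∈ d :: s := hperm.subset hx |> List.mem_cons_of_mem d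
        rcases List.mem_cons.mp (hA.subset (by
          rcases List.mem_append.mp hx with h | h
          · exact List.mem_append.mpr (Or.inl h)
          · exact List.mem_append.mpr (Or.inr (List.mem_cons_of_mem d h)))) with h | h
        · exact le_of_eq (by rw [h])
        · exact hds.1 x h
      have hmaxp : ∀ x ∈ p, w x ≤ w d := fun x hx =>
        hmaxall x (List.mem_append.mpr (Or.inl hx))
      have step1 := cascade_front u w hu d p hmaxp q
      have step2 : cascadeF u w (d :: (p ++ q)) ≤ cascadeF u w (d :: s) := by
        have h := ih hds.2 (p ++ q) hperm
        have hd := hu d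
        simp only [cascadeF]
        nlinarith [hd.2]
      linarith
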